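/- Let S be an LPDS of the king grid with partner map m and let v ∈ S be in a far pair with v = (0,0), m(v) = (−1,−1). If every vertex of P(v) = N(v) \ N[m(v)] outside S has at most 2 neighbors in S and P(v) ∩ S = ∅, then there exist two distinct vertices in P(v) with exactly 2 neighbors in S that have the same neighborhood intersection with S — contradicting the locating property. Hence P(v) ∩ (T₃ ∪ S) ≠ ∅. -/

import Mathlib

/-- The king grid on `ℤ × ℤ`: distinct vertices are adjacent iff both
coordinates differ by at most 1 (equivalently, Euclidean distance ≤ √2). -/
def kingGrid : SimpleGraph (ℤ × ℤ) where
  Adj u v := u ≠ v ∧ |u.1 - v.1| ≤ 1 ∧ |u.2 - v.2| ≤ 1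
  symm := ⟨by
    rintro u v ⟨h, h1, h2⟩
    refine ⟨h.symm, ?_, ?_⟩ <;> rw [abs_sub_comm] <;> assumption⟩
  loopless := ⟨fun v h => h.1 rfl⟩

/-- Open neighborhood in the king grid. -/
def N (v : ℤ × ℤ) : Set (ℤ × ℤ) := kingGrid.neighborSet v

/-- Closed neighborhood in the king grid. -/
def Ncl (v : ℤ × ℤ) : Set (ℤ × ℤ) := insert v (kingGrid.neighborSet v)

/-- `S` is a dominating set of the king grid. -/
def IsDominating (S : Set (ℤ × ℤ)) : Prop := ∀ u : ℤ × ℤ, (Ncl u ∩ S).Nonempty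

/-- `S` is locating: distinct vertices outside `S` have distinct neighborhoods in `S`. -/
def IsLocating (S : Set (ℤ × ℤ)) : Prop :=
  ∀ u v : ℤ × ℤ, u ∉ S → v ∉ S → u ≠ v → N u ∩ S ≠ N v ∩ S

/-- `m` is the partner map of a perfect matching of the induced subgraph on `S`. -/
def IsPartnerMap (S : Set (ℤ × ℤ)) (m : ℤ × ℤ → ℤ × ℤ) : Prop :=
  ∀ v ∈ S, m v ∈ S ∧ kingGrid.Adj v (m v) ∧ m (m v) = v

/-- `S` is a locating-paired-dominating set with matching partner map `m`. -/
def IsLPDS (S : Set (ℤ × ℤ)) (m : ℤ × ℤ → ℤ × ℤ) : Prop :=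
  IsDominating S ∧ IsLocating S ∧ IsPartnerMap S m

/-- Pendant neighbors of `v` (relative to the partner map `m`). -/
def P (m : ℤ × ℤ → ℤ × ℤ) (v : ℤ × ℤ) : Set (ℤ × ℤ) := N v \ Ncl (m v)

/-- Interval neighbors of `v` (relative to the partner map `m`). -/
def I (m : ℤ × ℤ → ℤ × ℤ) (v : ℤ × ℤ) : Set (ℤ × ℤ) := N v ∩ N (m v)

lemma mem_N_iff {a b x y : ℤ} : ((x,y) ∈ N (a,b)) ↔ (¬(a = x ∧ b = y) ∧ -1 ≤ a - x ∧ a - x ≤ 1 ∧ -1 ≤ b - y ∧ b - y ≤ 1) := by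
  simp [N, kingGrid, SimpleGraph.neighborSet, Prod.ext_iff, abs_le, and_assoc]

lemma N_finite (u : ℤ × ℤ) : (N u).Finite := by
  apply Set.Finite.subset ((Set.finite_Icc (u.1-1) (u.1+1)).prod (Set.finite_Icc (u.2-1) (u.2+1)))
  rintro ⟨x,y⟩ hx
  obtain ⟨a,b⟩ := u
  rw [mem_N_iff] at hx
  simp only [Set.mem_prod, Set.mem_Icc]
  omega

lemma mem_P {m : ℤ × ℤ → ℤ × ℤ} (hm : m (0, 0) = (-1, -1)) {x y : ℤ} :
    (x,y) ∈ P m (0,0) ↔ ((x,y) = (-1,1) ∨ (x,y) = (0,1) ∨ (x,y) = (1,1) ∨ (x,y) = (1,0) ∨ (x,y) = (1,-1)) := by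
  have h1 : ((x,y) ∈ N ((0:ℤ),(0:ℤ))) ↔ _ := mem_N_iff
  have h2 : ((x,y) ∈ N ((-1:ℤ),(-1:ℤ))) ↔ _ := mem_N_iff
  simp only [P, hm, Set.mem_diff, Ncl, Set.mem_insert_iff, show kingGrid.neighborSet (-1,-1) = N (-1,-1) from rfl,
    h1, h2, Prod.mk.injEq]
  omega

lemma key {S : Set (ℤ × ℤ)} {u s : ℤ × ℤ} (hn : (N u ∩ S).ncard ≤ 2)
    (hv : ((0:ℤ),(0:ℤ)) ∈ N u ∩ S) (hs : s ∈ N u ∩ S) (hsv : s ≠ (0,0)) :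
    N u ∩ S = {(0,0), s} ∧ (N u ∩ S).ncard = 2 := by
  have hfin : (N u ∩ S).Finite := (N_finite u).inter_of_left _
  have hsub : ({((0:ℤ),(0:ℤ)), s} : Set (ℤ × ℤ)) ⊆ N u ∩ S := by
    rw [Set.insert_subset_iff, Set.singleton_subset_iff]; exact ⟨hv, hs⟩
  have hcard : ({((0:ℤ),(0:ℤ)), s} : Set (ℤ × ℤ)).ncard = 2 := Set.ncard_pair (Ne.symm hsv)
  have heq := Set.eq_of_subset_of_ncard_le hsub (hn.trans_eq hcard.symm) hfin
  exact ⟨heq.symm, by rw [← heq, hcard]⟩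

lemma pairup {S : Set (ℤ × ℤ)} {u1 u2 s : ℤ × ℤ}
    (h1n : (N u1 ∩ S).ncard ≤ 2) (h2n : (N u2 ∩ S).ncard ≤ 2)
    (hv1 : ((0:ℤ),(0:ℤ)) ∈ N u1 ∩ S) (hv2 : ((0:ℤ),(0:ℤ)) ∈ N u2 ∩ S)
    (hs1 : s ∈ N u1 ∩ S) (hs2 : s ∈ N u2 ∩ S) (hsv : s ≠ (0,0)) :
    (N u1 ∩ S).ncard = 2 ∧ (N u2 ∩ S).ncard = 2 ∧ N u1 ∩ S = N u2 ∩ S := by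
  obtain ⟨e1, c1⟩ := key h1n hv1 hs1 hsv
  obtain ⟨e2, c2⟩ := key h2n hv2 hs2 hsv
  exact ⟨c1, c2, e1.trans e2.symm⟩

theorem lemma_far_pair_normalized (S : Set (ℤ × ℤ)) (m : ℤ × ℤ → ℤ × ℤ)
    (h : IsLPDS S m) (hv : ((0:ℤ), (0:ℤ)) ∈ S) (hm : m (0, 0) = (-1, -1)) :
    ((∀ u ∈ P m (0, 0), u ∉ S → (N u ∩ S).ncard ≤ 2) → P m (0, 0) ∩ S = ∅ →
      ∃ u1 ∈ P m (0, 0), ∃ u2 ∈ P m (0, 0), u1 ≠ u2 ∧ u1 ∉ S ∧ u2 ∉ S ∧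
        (N u1 ∩ S).ncard = 2 ∧ (N u2 ∩ S).ncard = 2 ∧ N u1 ∩ S = N u2 ∩ S) ∧
    (P m (0, 0) ∩ ({u | u ∉ S ∧ 3 ≤ (N u ∩ S).ncard} ∪ S)).Nonempty := by
  obtain ⟨hD, hL, hM⟩ := h
  have pa : ((-1:ℤ),(1:ℤ)) ∈ P m (0,0) := (mem_P hm).mpr (by norm_num)
  have pb : ((0:ℤ),(1:ℤ)) ∈ P m (0,0) := (mem_P hm).mpr (by norm_num)
  have pc : ((1:ℤ),(1:ℤ)) ∈ P m (0,0) := (mem_P hm).mpr (by norm_num)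
  have pd : ((1:ℤ),(0:ℤ)) ∈ P m (0,0) := (mem_P hm).mpr (by norm_num)
  have pe : ((1:ℤ),(-1:ℤ)) ∈ P m (0,0) := (mem_P hm).mpr (by norm_num)
  have main : (∀ u ∈ P m (0, 0), u ∉ S → (N u ∩ S).ncard ≤ 2) → P m (0, 0) ∩ S = ∅ →
      ∃ u1 ∈ P m (0, 0), ∃ u2 ∈ P m (0, 0), u1 ≠ u2 ∧ u1 ∉ S ∧ u2 ∉ S ∧
        (N u1 ∩ S).ncard = 2 ∧ (N u2 ∩ S).ncard = 2 ∧ N u1 ∩ S = N u2 ∩ S := by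
    intro hle hPS
    have notS : ∀ u ∈ P m (0,0), u ∉ S := by
      intro u hu huS
      exact absurd (hPS ▸ (⟨hu, huS⟩ : u ∈ P m (0,0) ∩ S)) (Set.notMem_empty u)
    have hva : ((0:ℤ),(0:ℤ)) ∈ N ((-1:ℤ),(1:ℤ)) ∩ S := ⟨mem_N_iff.mpr (by norm_num), hv⟩
    have hvb : ((0:ℤ),(0:ℤ)) ∈ N ((0:ℤ),(1:ℤ)) ∩ S := ⟨mem_N_iff.mpr (by norm_num), hv⟩
    have hvc : ((0:ℤ),(0:ℤ)) ∈ N ((1:ℤ),(1:ℤ)) ∩ S := ⟨mem_N_iff.mpr (by norm_num), hv⟩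
    have hvd : ((0:ℤ),(0:ℤ)) ∈ N ((1:ℤ),(0:ℤ)) ∩ S := ⟨mem_N_iff.mpr (by norm_num), hv⟩
    have hve : ((0:ℤ),(0:ℤ)) ∈ N ((1:ℤ),(-1:ℤ)) ∩ S := ⟨mem_N_iff.mpr (by norm_num), hv⟩
    by_cases hb : ∀ s ∈ N ((0:ℤ),(1:ℤ)) ∩ S, s = (0,0)
    · by_cases hd : ∀ s ∈ N ((1:ℤ),(0:ℤ)) ∩ S, s = (0,0)
      · exfalso
        have e1 : N ((0:ℤ),(1:ℤ)) ∩ S = {((0:ℤ),(0:ℤ))} :=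
          Set.Subset.antisymm (fun s hs => hb s hs) (by rintro z rfl; exact hvb)
        have e2 : N ((1:ℤ),(0:ℤ)) ∩ S = {((0:ℤ),(0:ℤ))} :=
          Set.Subset.antisymm (fun s hs => hd s hs) (by rintro z rfl; exact hvd)
        exact hL (0,1) (1,0) (notS _ pb) (notS _ pd) (by norm_num) (e1.trans e2.symm)
      · push_neg at hd
        obtain ⟨s, hs, hs0⟩ := hd
        obtain ⟨x, y⟩ := s
        have hsP : ¬((x,y) = ((-1:ℤ),(1:ℤ)) ∨ (x,y) = (0,1) ∨ (x,y) = (1,1) ∨ (x,y) = (1,0) ∨ (x,y) = (1,-1)) := by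
          intro hp
          exact notS _ ((mem_P hm).mpr hp) hs.2
        have h1 := mem_N_iff.mp hs.1
        have hcs : ((x,y) ∈ N ((1:ℤ),(1:ℤ))) ∨ ((x,y) ∈ N ((1:ℤ),(-1:ℤ))) := by
          rw [mem_N_iff, mem_N_iff]
          simp only [Prod.mk.injEq] at hsP hs0
          omega
        rcases hcs with hc | hc
        · refine ⟨(1,0), pd, (1,1), pc, by norm_num, notS _ pd, notS _ pc, ?_⟩
          exact pairup (hle _ pd (notS _ pd)) (hle _ pc (notS _ pc)) hvd hvc hs ⟨hc, hs.2⟩ hs0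
        · refine ⟨(1,0), pd, (1,-1), pe, by norm_num, notS _ pd, notS _ pe, ?_⟩
          exact pairup (hle _ pd (notS _ pd)) (hle _ pe (notS _ pe)) hvd hve hs ⟨hc, hs.2⟩ hs0
    · push_neg at hb
      obtain ⟨s, hs, hs0⟩ := hb
      obtain ⟨x, y⟩ := s
      have hsP : ¬((x,y) = ((-1:ℤ),(1:ℤ)) ∨ (x,y) = (0,1) ∨ (x,y) = (1,1) ∨ (x,y) = (1,0) ∨ (x,y) = (1,-1)) := by
        intro hp
        exact notS _ ((mem_P hm).mpr hp) hs.2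
      have h1 := mem_N_iff.mp hs.1
      have hcs : ((x,y) ∈ N ((-1:ℤ),(1:ℤ))) ∨ ((x,y) ∈ N ((1:ℤ),(1:ℤ))) := by
        rw [mem_N_iff, mem_N_iff]
        simp only [Prod.mk.injEq] at hsP hs0
        omega
      rcases hcs with hc | hc
      · refine ⟨(0,1), pb, (-1,1), pa, by norm_num, notS _ pb, notS _ pa, ?_⟩
        exact pairup (hle _ pb (notS _ pb)) (hle _ pa (notS _ pa)) hvb hva hs ⟨hc, hs.2⟩ hs0
      · refine ⟨(0,1), pb, (1,1), pc, by norm_num, notS _ pb, notS _ pc, ?_⟩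
        exact pairup (hle _ pb (notS _ pb)) (hle _ pc (notS _ pc)) hvb hvc hs ⟨hc, hs.2⟩ hs0
  refine ⟨main, ?_⟩
  by_contra hne
  rw [Set.not_nonempty_iff_eq_empty, Set.eq_empty_iff_forall_notMem] at hne
  have hPS : P m (0,0) ∩ S = ∅ := by
    rw [Set.eq_empty_iff_forall_notMem]
    intro u ⟨hu, huS⟩
    exact hne u ⟨hu, Or.inr huS⟩
  have hle : ∀ u ∈ P m (0, 0), u ∉ S → (N u ∩ S).ncard ≤ 2 := by
    intro u hu huS
    by_contra h3
    exact hne u ⟨hu, Or.inl ⟨huS, by omega⟩⟩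
  obtain ⟨u1, hu1, u2, hu2, hne12, h1S, h2S, _, _, heq⟩ := main hle hPS
  exact hL u1 u2 h1S h2S hne12 heq
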